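/- Suppose f : ℝ^n → ℝ is differentiable with K-Lipschitz gradient, bounded below with minimizer set X* nonempty, and satisfies the error bound dist(x, X*) ≤ κ‖∇f(x)‖ for all x. Then gradient descent with step size 0 < γ < 1/K converges linearly: f(x(t)) − f* ≤ (1 − γc)^t (f(x(0)) − f*) for some constant c > 0 with γc < 1 depending only on K and κ. -/

import Mathlib

noncomputable section

section Aux

variable {E : Type*} [NormedAddCommGroup E] [InnerProductSpace ℝ E] [CompleteSpace E]

/-- Derivative of `f` along a line. -/
lemma aux_curve_deriv (f : E → ℝ) (hdiff : Differentiable ℝ f) (x v : E) (t : ℝ) :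
    HasDerivAt (fun s : ℝ => f (x + s • v))
      (inner ℝ (gradient f (x + t • v)) v : ℝ) t := by
  have h1 : HasDerivAt (fun s : ℝ => x + s • v) v t := by
    simpa using ((hasDerivAt_id t).smul_const v).const_add x
  have h3 : HasFDerivAt f ((InnerProductSpace.toDual ℝ E) (gradient f (x + t • v)))
      (x + t • v) :=
    hasGradientAt_iff_hasFDerivAt.mp (hdiff (x + t • v)).hasGradientAt
  have h4 : HasDerivAt (fun s : ℝ => f (x + s • v)) _ t := h3.comp_hasDerivAt t h1
  simpa [InnerProductSpace.toDual_apply_apply] using h4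

/-- First-order lower bound for convex differentiable functions. -/
lemma aux_convex_lb (f : E → ℝ) (hdiff : Differentiable ℝ f)
    (hconv : ConvexOn ℝ Set.univ f) (x y : E) :
    f x + (inner ℝ (gradient f x) (y - x) : ℝ) ≤ f y := by
  set v := y - x with hv
  have hg : HasDerivAt (fun s : ℝ => f (x + s • v)) (inner ℝ (gradient f x) v : ℝ) 0 := by
    simpa using aux_curve_deriv f hdiff x v 0
  have hslope : Filter.Tendsto (slope (fun s : ℝ => f (x + s • v)) 0) (nhdsWithin 0 (Set.Ioi 0))
      (nhds (inner ℝ (gradient f x) v : ℝ)) := by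
    refine (hasDerivAt_iff_tendsto_slope.mp hg).mono_left
      (nhdsWithin_mono _ ?_)
    intro s hs
    exact ne_of_gt hs
  have key : ∀ᶠ s in nhdsWithin (0:ℝ) (Set.Ioi 0),
      slope (fun s : ℝ => f (x + s • v)) 0 s ≤ f y - f x := by
    filter_upwards [Ioc_mem_nhdsGT_of_mem
      (show (0:ℝ) ∈ Set.Ico (0:ℝ) 1 by constructor <;> norm_num)] with s hs
    have hs0 : 0 < s := hs.1
    have hs1 : s ≤ 1 := hs.2
    have hcomb := hconv.2 (Set.mem_univ x) (Set.mem_univ y)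
      (by linarith : (0:ℝ) ≤ 1 - s) hs0.le (by ring)
    have hpt : (1 - s) • x + s • y = x + s • v := by
      rw [hv]; rw [sub_smul, one_smul, smul_sub]; abel
    rw [hpt] at hcomb
    have h0 : f (x + (0:ℝ) • v) = f x := by simp
    rw [slope_def_field]
    rw [h0, sub_zero, div_le_iff₀ hs0]
    simp only [smul_eq_mul] at hcomb
    nlinarith
  have := le_of_tendsto hslope key
  linarith [this]

/-- Descent lemma: quadratic upper bound for functions with Lipschitz gradient. -/
lemma aux_descent (f : E → ℝ) (K : ℝ) (hdiff : Differentiable ℝ f)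
    (hlip : ∀ x y, ‖gradient f x - gradient f y‖ ≤ K * ‖x - y‖) (x y : E) :
    f y ≤ f x + (inner ℝ (gradient f x) (y - x) : ℝ) + K / 2 * ‖y - x‖ ^ 2 := by
  set v := y - x with hv
  set d : ℝ := (inner ℝ (gradient f x) v : ℝ) with hd
  set φ : ℝ → ℝ := fun s => f (x + s • v) - s * d - K * s ^ 2 * ‖v‖ ^ 2 / 2 with hφ
  have hφd : ∀ s : ℝ, HasDerivAt φ
      ((inner ℝ (gradient f (x + s • v)) v : ℝ) - d - K * s * ‖v‖ ^ 2) s := by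
    intro s
    have h1 := aux_curve_deriv f hdiff x v s
    have h2 : HasDerivAt (fun s : ℝ => s * d) d s := by
      simpa using (hasDerivAt_id s).mul_const d
    have h3 : HasDerivAt (fun s : ℝ => K * s ^ 2 * ‖v‖ ^ 2 / 2) (K * s * ‖v‖ ^ 2) s := by
      have : HasDerivAt (fun s : ℝ => K * s ^ 2 * ‖v‖ ^ 2 / 2) _ s :=
        (((hasDerivAt_pow 2 s).const_mul K).mul_const (‖v‖ ^ 2)).div_const 2
      convert this using 1
      ring
    exact (h1.sub h2).sub h3
  have hmono : AntitoneOn φ (Set.Icc 0 1) := by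
    apply antitoneOn_of_deriv_nonpos (convex_Icc 0 1)
    · exact (Differentiable.continuous (fun s => (hφd s).differentiableAt)).continuousOn
    · intro s _
      exact ((hφd s).differentiableAt).differentiableWithinAt
    · intro s hs
      rw [interior_Icc] at hs
      rw [(hφd s).deriv]
      have h1 : (inner ℝ (gradient f (x + s • v)) v : ℝ) - d
          = (inner ℝ (gradient f (x + s • v) - gradient f x) v : ℝ) := by
        rw [hd, inner_sub_left]
      have h2 : (inner ℝ (gradient f (x + s • v) - gradient f x) v : ℝ)
          ≤ K * s * ‖v‖ ^ 2 := by
        calc (inner ℝ (gradient f (x + s • v) - gradient f x) v : ℝ)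
            ≤ ‖gradient f (x + s • v) - gradient f x‖ * ‖v‖ := real_inner_le_norm _ _
          _ ≤ (K * ‖(x + s • v) - x‖) * ‖v‖ :=
              mul_le_mul_of_nonneg_right (hlip _ _) (norm_nonneg _)
          _ = K * s * ‖v‖ ^ 2 := by
              rw [add_sub_cancel_left, norm_smul, Real.norm_eq_abs, abs_of_pos hs.1]
              ring
      linarith [h1 ▸ h2]
  have h01 := hmono (Set.left_mem_Icc.mpr zero_le_one) (Set.right_mem_Icc.mpr zero_le_one)
    zero_le_one
  have e0 : φ 0 = f x := by simp [hφ]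
  have e1 : φ 1 = f y - d - K * ‖v‖ ^ 2 / 2 := by
    simp [hφ, hv]
  rw [e0, e1] at h01
  have : K / 2 * ‖y - x‖ ^ 2 = K * ‖v‖ ^ 2 / 2 := by rw [hv]; ring
  linarith [this]

end Aux

/-- Linear convergence of gradient descent: if `f` is differentiable with `K`-Lipschitz
gradient, convex, bounded below with nonempty minimizer set `X*`, and satisfies the error
bound `dist(x, X*) ≤ κ‖∇f(x)‖`, then gradient descent with step size `0 < γ < 1/K`
converges linearly: `f(x(t)) − f* ≤ (1 − γc)ᵗ (f(x(0)) − f*)` for some constant `c > 0`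
with `γc < 1`. -/
theorem gradient_descent_linear_convergence {n : ℕ}
    (f : EuclideanSpace ℝ (Fin n) → ℝ) (K κ γ fstar : ℝ)
    (hK : 0 < K) (hκ : 0 < κ)
    (hdiff : Differentiable ℝ f)
    (hlip : ∀ x y, ‖gradient f x - gradient f y‖ ≤ K * ‖x - y‖)
    (hconv : ConvexOn ℝ Set.univ f)
    (Xstar : Set (EuclideanSpace ℝ (Fin n)))
    (hXstar : Xstar = {x | IsMinOn f Set.univ x})
    (hne : Xstar.Nonempty)
    (hfstar : ∀ x ∈ Xstar, f x = fstar)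
    (heb : ∀ x, Metric.infDist x Xstar ≤ κ * ‖gradient f x‖)
    (hγ0 : 0 < γ) (hγ : γ < 1 / K) :
    ∃ c : ℝ, 0 < c ∧ γ * c < 1 ∧
      ∀ x : ℕ → EuclideanSpace ℝ (Fin n),
        (∀ t, x (t + 1) = x t - γ • gradient f (x t)) →
        ∀ t, f (x t) - fstar ≤ (1 - γ * c) ^ t * (f (x 0) - fstar) := by
  obtain ⟨x₀, hx₀⟩ := hne
  have hx₀min : IsMinOn f Set.univ x₀ := by rw [hXstar] at hx₀; exact hx₀
  have hx₀f : f x₀ = fstar := hfstar x₀ hx₀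
  -- `fstar` is a global lower bound
  have hlb : ∀ z, fstar ≤ f z := by
    intro z
    rw [← hx₀f]
    exact hx₀min (Set.mem_univ z)
  -- gradient-domination: `f z - fstar ≤ κ * ‖∇f z‖²`
  have hgd : ∀ z, f z - fstar ≤ κ * ‖gradient f z‖ ^ 2 := by
    intro z
    by_cases hg : gradient f z = 0
    · have := aux_convex_lb f hdiff hconv z x₀
      rw [hg] at this
      simp only [inner_zero_left, add_zero] at this
      rw [hg]
      simp only [norm_zero]
      nlinarith [hlb z, hx₀f ▸ this]
    · have hgpos : 0 < ‖gradient f z‖ := norm_pos_iff.mpr hg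
      have hbd : ∀ y ∈ Xstar, (f z - fstar) / ‖gradient f z‖ ≤ dist z y := by
        intro y hy
        have h1 := aux_convex_lb f hdiff hconv z y
        rw [hfstar y hy] at h1
        have h2 : (inner ℝ (gradient f z) (y - z) : ℝ) ≥ -(‖gradient f z‖ * ‖y - z‖) := by
          have := abs_real_inner_le_norm (gradient f z) (y - z)
          have := neg_abs_le (inner ℝ (gradient f z) (y - z) : ℝ)
          linarith
        have h3 : f z - fstar ≤ ‖gradient f z‖ * dist z y := by
          rw [dist_eq_norm]
          rw [show ‖y - z‖ = ‖z - y‖ from norm_sub_rev _ _] at h2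
          linarith
        rw [div_le_iff₀ hgpos]
        linarith [h3]
      have hid : (f z - fstar) / ‖gradient f z‖ ≤ Metric.infDist z Xstar := by
        by_contra hlt
        push_neg at hlt
        obtain ⟨y, hy, hdy⟩ := (Metric.infDist_lt_iff ⟨x₀, hx₀⟩).mp hlt
        exact absurd (hbd y hy) (not_le.mpr hdy)
      have h4 := le_trans hid (heb z)
      rw [div_le_iff₀ hgpos] at h4
      nlinarith [h4]
  -- basic facts about the step size
  have hγK : γ * K < 1 := (lt_div_iff₀ hK).mp hγ
  have h1γK : 0 < 1 - γ * K / 2 := by linarith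
  set c : ℝ := min ((1 - γ * K / 2) / κ) (1 / (2 * γ)) with hc
  have hcpos : 0 < c := lt_min (div_pos h1γK hκ) (by positivity)
  have hγc1 : γ * c < 1 := by
    have : γ * c ≤ γ * (1 / (2 * γ)) :=
      mul_le_mul_of_nonneg_left (min_le_right _ _) hγ0.le
    have heq : γ * (1 / (2 * γ)) = 1 / 2 := by field_simp
    nlinarith [mul_le_mul_of_nonneg_left (min_le_right ((1 - γ * K / 2) / κ) (1 / (2 * γ))) hγ0.le]
  have hγc0 : 0 ≤ 1 - γ * c := by linarith
  have hγcle : γ * c ≤ γ * ((1 - γ * K / 2) / κ) :=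
    mul_le_mul_of_nonneg_left (min_le_left _ _) hγ0.le
  refine ⟨c, hcpos, hγc1, ?_⟩
  intro x hx
  -- one-step contraction
  have hstep : ∀ z : EuclideanSpace ℝ (Fin n),
      f (z - γ • gradient f z) - fstar ≤ (1 - γ * c) * (f z - fstar) := by
    intro z
    set g := gradient f z with hg
    have hdesc := aux_descent f K hdiff hlip z (z - γ • g)
    have he1 : z - γ • g - z = -(γ • g) := by abel
    rw [he1] at hdesc
    have he2 : (inner ℝ g (-(γ • g)) : ℝ) = -(γ * ‖g‖ ^ 2) := by
      rw [inner_neg_right, real_inner_smul_right, real_inner_self_eq_norm_sq]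
    have he3 : ‖-(γ • g)‖ ^ 2 = γ ^ 2 * ‖g‖ ^ 2 := by
      rw [norm_neg, norm_smul, Real.norm_eq_abs, abs_of_pos hγ0, mul_pow]
    rw [he2, he3] at hdesc
    -- hdesc : f (z - γ•g) ≤ f z - γ‖g‖² + K/2 * γ²‖g‖²
    have hq := hgd z
    have hnn : 0 ≤ f z - fstar := by linarith [hlb z]
    have hgsq : (f z - fstar) / κ ≤ ‖g‖ ^ 2 := by
      rw [div_le_iff₀ hκ]; nlinarith [hq]
    have key : f (z - γ • g) - fstar ≤ (1 - γ * ((1 - γ * K / 2) / κ)) * (f z - fstar) := by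
      have hcoef : 0 < γ * (1 - γ * K / 2) := by positivity
      have h5 : γ * (1 - γ * K / 2) * ((f z - fstar) / κ) ≤ γ * (1 - γ * K / 2) * ‖g‖ ^ 2 :=
        mul_le_mul_of_nonneg_left hgsq hcoef.le
      have h6 : f (z - γ • g) ≤ f z - γ * (1 - γ * K / 2) * ‖g‖ ^ 2 := by nlinarith [hdesc]
      have h7 : (1 - γ * ((1 - γ * K / 2) / κ)) * (f z - fstar)
          = (f z - fstar) - γ * (1 - γ * K / 2) * ((f z - fstar) / κ) := by
        field_simp
      linarith
    have h8 : (1 - γ * ((1 - γ * K / 2) / κ)) * (f z - fstar) ≤ (1 - γ * c) * (f z - fstar) :=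
      mul_le_mul_of_nonneg_right (by linarith) hnn
    linarith
  intro t
  induction t with
  | zero => simp
  | succ t ih =>
      have := hstep (x t)
      rw [← hx t] at this
      calc f (x (t + 1)) - fstar ≤ (1 - γ * c) * (f (x t) - fstar) := this
        _ ≤ (1 - γ * c) * ((1 - γ * c) ^ t * (f (x 0) - fstar)) :=
            mul_le_mul_of_nonneg_left ih hγc0
        _ = (1 - γ * c) ^ (t + 1) * (f (x 0) - fstar) := by ring
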